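/- Let G be a finite simple graph. Then for every integer i ≥ 0, B_i(G) ≥ Σ_{v ∈ V} C(deg v, i+1) − k_{i+2}(G) + Σ_{a=2}^{⌊(i+2)/2⌋} k_{a, i+2−a}(G), where for 2 ≤ a ≤ ⌊(i+2)/2⌋, k_{a,i+2−a}(G) denotes the number of (i+2)-element vertex subsets S such that the induced subgraph G[S] is isomorphic to the complete bipartite graph K_{a, i+2−a}. -/

import Mathlib

open Finset

/-- The `i`-th Betti number in the linear strand of the edge ideal of `G`:
`B_i(G) = Σ_{S ⊆ V, |S| = i+2} (#components of the complement of G[S] − 1)`. -/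
noncomputable def linStrand {V : Type*} [Fintype V] [DecidableEq V]
    (G : SimpleGraph V) (i : ℕ) : ℕ :=
  ∑ S ∈ (Finset.univ : Finset V).powersetCard (i + 2),
    (Nat.card ((G.induce (S : Set V))ᶜ.ConnectedComponent) - 1)

/-- The number of `m`-element vertex subsets `S` of `G` whose induced subgraph
is isomorphic to the graph `H`. -/
noncomputable def numIndIso {V W : Type*} [Fintype V] [DecidableEq V]
    (G : SimpleGraph V) (m : ℕ) (H : SimpleGraph W) : ℕ :=
  {S : Finset V | S.card = m ∧ Nonempty (G.induce (S : Set V) ≃g H)}.ncard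

open SimpleGraph
open scoped Classical

-- components lower bound via injective-on set
lemma LSB.card_le_nat_card_of_injOn {α β : Type*} [Finite β] (f : α → β) (T : Finset α)
    (h : Set.InjOn f T) : T.card ≤ Nat.card β := by
  have := Fintype.ofFinite β
  rw [Nat.card_eq_fintype_card]
  calc T.card = (T.image f).card := (Finset.card_image_of_injOn h).symm
    _ ≤ Fintype.card β := Finset.card_le_univ _

lemma LSB.isolated_reachable {α : Type*} {H : SimpleGraph α} {v w : α}
    (hv : ∀ w, ¬ H.Adj v w) (h : H.Reachable v w) : v = w := by
  obtain ⟨p⟩ := h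
  cases p with
  | nil => rfl
  | cons h q => exact absurd h (hv _)

lemma LSB.neighborSet_inl {a b : ℕ} (x : Fin a) :
    (completeBipartiteGraph (Fin a) (Fin b)).neighborSet (Sum.inl x) = Set.range Sum.inr := by
  ext w; cases w <;> simp [completeBipartiteGraph]

lemma LSB.neighborSet_inr {a b : ℕ} (y : Fin b) :
    (completeBipartiteGraph (Fin a) (Fin b)).neighborSet (Sum.inr y) = Set.range Sum.inl := by
  ext w; cases w <;> simp [completeBipartiteGraph]

-- iso invariant: from an iso K_{a,n-a} ≃g K_{a',n-a'} with constraints, a = a'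
lemma LSB.bipartite_eq {n a a' : ℕ} (ha : 2 ≤ a) (ha2 : a ≤ n / 2) (ha' : 2 ≤ a') (ha'2 : a' ≤ n / 2)
    (ψ : completeBipartiteGraph (Fin a) (Fin (n - a)) ≃g
      completeBipartiteGraph (Fin a') (Fin (n - a'))) : a = a' := by
  have hb : 0 < n - a := by omega
  have hcard : Nat.card ((completeBipartiteGraph (Fin a') (Fin (n - a'))).neighborSet
        (ψ (Sum.inr ⟨0, hb⟩)))
      = Nat.card ((completeBipartiteGraph (Fin a) (Fin (n - a))).neighborSet (Sum.inr ⟨0, hb⟩)) :=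
    Nat.card_congr (ψ.mapNeighborSet _).symm
  rcases hψ : ψ (Sum.inr ⟨0, hb⟩) with x | y <;> rw [hψ] at hcard
  · rw [LSB.neighborSet_inl, LSB.neighborSet_inr, Nat.card_range_of_injective Sum.inr_injective,
      Nat.card_range_of_injective Sum.inl_injective] at hcard
    simp only [Nat.card_eq_fintype_card, Fintype.card_fin] at hcard
    omega
  · rw [LSB.neighborSet_inr, LSB.neighborSet_inr, Nat.card_range_of_injective Sum.inl_injective,
      Nat.card_range_of_injective Sum.inl_injective] at hcard
    simp only [Nat.card_eq_fintype_card, Fintype.card_fin] at hcard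
    omega

lemma LSB.reachable_isLeft {a b : ℕ} {u v : Fin a ⊕ Fin b}
    (h : (completeBipartiteGraph (Fin a) (Fin b))ᶜ.Reachable u v) : u.isLeft = v.isLeft := by
  obtain ⟨p⟩ := h
  induction p with
  | nil => rfl
  | @cons x y w h p ih =>
    rw [← ih]
    rcases h with ⟨hne, hnadj⟩
    cases x <;> cases y <;> simp_all [completeBipartiteGraph]

noncomputable def LSB.domSet {V : Type*} [DecidableEq V] (G : SimpleGraph V) (S : Finset V) : Finset V :=
  S.filter (fun v => ∀ w ∈ S, w ≠ v → G.Adj v w)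

lemma LSB.dom_isolated {V : Type*} [Fintype V] [DecidableEq V] (G : SimpleGraph V)
    (S : Finset V) {v : ↥(S : Set V)} (hv : ↑v ∈ LSB.domSet G S) (w : ↥(S : Set V)) :
    ¬ ((G.induce (S : Set V))ᶜ).Adj v w := by
  intro h
  rw [SimpleGraph.compl_adj] at h
  obtain ⟨hne, hnadj⟩ := h
  simp only [LSB.domSet, Finset.mem_filter] at hv
  exact hnadj (hv.2 ↑w (by exact_mod_cast w.2) (fun hh => hne (Subtype.ext hh.symm)))

/-- an iso induces an iso of complements -/
def LSB.isoCompl {α β : Type*} {G : SimpleGraph α} {H : SimpleGraph β} (e : G ≃g H) :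
    Gᶜ ≃g Hᶜ :=
  ⟨e.toEquiv, by
    intro u v
    simp [SimpleGraph.compl_adj, e.map_adj_iff, ne_eq, EmbeddingLike.apply_eq_iff_eq]⟩

lemma LSB.domSet_card_eq {V : Type*} [Fintype V] [DecidableEq V] (G : SimpleGraph V)
    (S : Finset V) :
    ((Finset.univ : Finset ↥(S : Set V)).filter (fun v => ↑v ∈ LSB.domSet G S)).card
      = (LSB.domSet G S).card := by
  refine Finset.card_bij (fun v _ => (↑v : V)) ?_ ?_ ?_
  · intro v hv; exact (Finset.mem_filter.mp hv).2
  · intro a ha b hb h; exact Subtype.ext h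
  · intro w hw
    have hwS : w ∈ S := by
      simp only [LSB.domSet, Finset.mem_filter] at hw
      exact hw.1
    exact ⟨⟨w, by exact_mod_cast hwS⟩, by simpa using hw, rfl⟩

lemma LSB.comp_ge_nonclique {V : Type*} [Fintype V] [DecidableEq V] (G : SimpleGraph V)
    (S : Finset V) (hnc : ¬ G.IsClique ↑S) :
    (LSB.domSet G S).card + 1 ≤ Nat.card ((G.induce (S : Set V))ᶜ.ConnectedComponent) := by
  simp only [SimpleGraph.isClique_iff, Set.Pairwise, Finset.mem_coe] at hnc
  push_neg at hnc
  obtain ⟨x, hx, y, hy, hxy, hnadj⟩ := hnc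
  set H := (G.induce (S : Set V))ᶜ with hH
  have hxdom : (⟨x, by exact_mod_cast hx⟩ : ↥(S : Set V)) ∉
      (Finset.univ : Finset ↥(S : Set V)).filter (fun v => ↑v ∈ LSB.domSet G S) := by
    simp only [Finset.mem_filter, Finset.mem_univ, true_and, LSB.domSet]
    intro h
    exact hnadj (h.2 y hy (Ne.symm hxy))
  set T : Finset ↥(S : Set V) :=
    insert (⟨x, by exact_mod_cast hx⟩ : ↥(S : Set V))
      ((Finset.univ : Finset ↥(S : Set V)).filter (fun v => ↑v ∈ LSB.domSet G S)) with hT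
  have hTcard : T.card = (LSB.domSet G S).card + 1 := by
    rw [hT, Finset.card_insert_of_notMem hxdom, LSB.domSet_card_eq]
  have hxadj : H.Adj ⟨x, by exact_mod_cast hx⟩ ⟨y, by exact_mod_cast hy⟩ := by
    rw [hH, SimpleGraph.compl_adj]
    exact ⟨fun h => hxy (congrArg Subtype.val h), by simpa using hnadj⟩
  rw [← hTcard]
  apply LSB.card_le_nat_card_of_injOn H.connectedComponentMk
  intro a ha b hb hab
  rw [Finset.mem_coe, hT, Finset.mem_insert] at ha hb
  rw [SimpleGraph.ConnectedComponent.eq] at hab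
  rcases ha with ha | ha
  · rcases hb with hb | hb
    · rw [ha, hb]
    · subst ha
      have := LSB.isolated_reachable (LSB.dom_isolated G S (Finset.mem_filter.mp hb).2) hab.symm
      exact this.symm
  · have := LSB.isolated_reachable (LSB.dom_isolated G S (Finset.mem_filter.mp ha).2) hab
    rcases hb with hb | hb
    · subst hb; subst this
      exact absurd hxadj (LSB.dom_isolated G S (Finset.mem_filter.mp ha).2 _)
    · exact this ▸ rfl

lemma LSB.comp_clique {V : Type*} [Fintype V] [DecidableEq V] (G : SimpleGraph V)
    (S : Finset V) (hc : G.IsClique ↑S) :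
    Nat.card ((G.induce (S : Set V))ᶜ.ConnectedComponent) = S.card
      ∧ LSB.domSet G S = S := by
  have hdom : LSB.domSet G S = S := by
    apply Finset.Subset.antisymm
    · intro v hv
      simp only [LSB.domSet, Finset.mem_filter] at hv
      exact hv.1
    · intro v hv
      simp only [LSB.domSet, Finset.mem_filter]
      exact ⟨hv, fun w hw hne =>
        hc (by exact_mod_cast hv) (by exact_mod_cast hw) (Ne.symm hne)⟩
  refine ⟨?_, hdom⟩
  have hiso : ∀ v : ↥(S : Set V), ∀ w, ¬ ((G.induce (S : Set V))ᶜ).Adj v w := by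
    intro v w
    apply LSB.dom_isolated
    rw [hdom]
    exact_mod_cast v.2
  have hbij : Function.Bijective ((G.induce (S : Set V))ᶜ.connectedComponentMk) := by
    constructor
    · intro a b hab
      exact LSB.isolated_reachable (hiso a) (SimpleGraph.ConnectedComponent.eq.mp hab)
    · exact fun c => Quot.exists_rep c
  have hcard := Nat.card_eq_of_bijective _ hbij
  rw [← hcard, Nat.card_coe_set_eq, Set.ncard_coe_finset]

lemma LSB.iso_case {V : Type*} [Fintype V] [DecidableEq V] (G : SimpleGraph V)
    (S : Finset V) {a b : ℕ} (ha : 2 ≤ a) (hb : 2 ≤ b)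
    (e : G.induce (S : Set V) ≃g completeBipartiteGraph (Fin a) (Fin b)) :
    LSB.domSet G S = ∅ ∧ 2 ≤ Nat.card ((G.induce (S : Set V))ᶜ.ConnectedComponent)
      ∧ ¬ G.IsClique ↑S := by
  have ha0 : (0 : ℕ) < a := by omega
  have hb0 : (0 : ℕ) < b := by omega
  refine ⟨?_, ?_, ?_⟩
  · -- no dominating vertex
    rw [Finset.eq_empty_iff_forall_notMem]
    intro v hv
    simp only [LSB.domSet, Finset.mem_filter] at hv
    obtain ⟨hvS, hdom⟩ := hv
    have key : ∀ u : Fin a ⊕ Fin b, u ≠ e ⟨v, by exact_mod_cast hvS⟩ →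
        (completeBipartiteGraph (Fin a) (Fin b)).Adj (e ⟨v, by exact_mod_cast hvS⟩) u := by
      intro u hu
      have h1 : (↑(e.symm u) : V) ∈ S := by exact_mod_cast (e.symm u).2
      have h2 : (↑(e.symm u) : V) ≠ v := by
        intro hh
        apply hu
        have : e.symm u = ⟨v, by exact_mod_cast hvS⟩ := Subtype.ext hh
        rw [← this, RelIso.apply_symm_apply]
      have h3 : G.Adj v ↑(e.symm u) := hdom _ h1 h2
      have h4 : (G.induce (S : Set V)).Adj ⟨v, by exact_mod_cast hvS⟩ (e.symm u) := by
        simpa using h3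
      have := e.map_adj_iff.mpr h4
      rwa [RelIso.apply_symm_apply] at this
    rcases he : e ⟨v, by exact_mod_cast hvS⟩ with x | y
    · obtain ⟨x', hx'⟩ := Fintype.exists_ne_of_one_lt_card (by simp; omega) x
      have := key (Sum.inl x') (by rw [he]; simpa using hx')
      rw [he] at this
      simpa [completeBipartiteGraph] using this
    · obtain ⟨y', hy'⟩ := Fintype.exists_ne_of_one_lt_card (by simp; omega) y
      have := key (Sum.inr y') (by rw [he]; simpa using hy')
      rw [he] at this
      simpa [completeBipartiteGraph] using this
  · -- at least two components
    set H := (G.induce (S : Set V))ᶜ with hHdef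
    have hft := Fintype.ofFinite H.ConnectedComponent
    rw [Nat.card_eq_fintype_card]
    refine Fintype.one_lt_card_iff_nontrivial.mpr ?_
    set e' := LSB.isoCompl e
    refine ⟨H.connectedComponentMk (e.symm (Sum.inl ⟨0, ha0⟩)),
      H.connectedComponentMk (e.symm (Sum.inr ⟨0, hb0⟩)), ?_⟩
    intro hcomp
    have hreach := SimpleGraph.ConnectedComponent.eq.mp hcomp
    have := hreach.map e'.toHom
    have h2 : (completeBipartiteGraph (Fin a) (Fin b))ᶜ.Reachable
        (Sum.inl ⟨0, ha0⟩) (Sum.inr ⟨0, hb0⟩) := by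
      have hl : e'.toHom (e.symm (Sum.inl ⟨0, ha0⟩)) = Sum.inl ⟨0, ha0⟩ :=
        e.apply_symm_apply _
      have hr : e'.toHom (e.symm (Sum.inr ⟨0, hb0⟩)) = Sum.inr ⟨0, hb0⟩ :=
        e.apply_symm_apply _
      rwa [hl, hr] at this
    simpa using LSB.reachable_isLeft h2
  · -- not a clique
    intro hc
    have h0 : (⟨0, ha0⟩ : Fin a) ≠ ⟨1, by omega⟩ := by simp
    have hne : e.symm (Sum.inl ⟨0, ha0⟩) ≠ e.symm (Sum.inl ⟨1, by omega⟩) := by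
      intro hh
      exact h0 (by simpa using e.symm.injective hh)
    have hadj := hc (x := ↑(e.symm (Sum.inl ⟨0, ha0⟩))) (by exact_mod_cast (e.symm _).2)
      (y := ↑(e.symm (Sum.inl ⟨1, by omega⟩))) (by exact_mod_cast (e.symm _).2)
      (fun hh => hne (Subtype.ext hh))
    have h4 : (G.induce (S : Set V)).Adj (e.symm (Sum.inl ⟨0, ha0⟩))
        (e.symm (Sum.inl ⟨1, by omega⟩)) := by simpa using hadj
    have := e.map_adj_iff.mpr h4
    rw [RelIso.apply_symm_apply, RelIso.apply_symm_apply] at this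
    simpa [completeBipartiteGraph] using this

lemma LSB.sum_domSet {V : Type*} [Fintype V] [DecidableEq V] (G : SimpleGraph V)
    [DecidableRel G.Adj] (i : ℕ) :
    ∑ S ∈ (Finset.univ : Finset V).powersetCard (i + 2), (LSB.domSet G S).card
      = ∑ v : V, (G.degree v).choose (i + 1) := by
  have h1 : ∀ S : Finset V, (LSB.domSet G S).card
      = ∑ v : V, if v ∈ S ∧ ∀ w ∈ S, w ≠ v → G.Adj v w then 1 else 0 := by
    intro S
    rw [← Finset.card_filter]
    apply Finset.card_nbij id
    · intro v hv
      simp only [LSB.domSet, Finset.mem_filter] at hv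
      simpa using hv
    · intro a _ b _ h; exact h
    · intro v hv
      simp only [Finset.coe_filter, Finset.mem_univ, true_and, Set.mem_setOf_eq] at hv
      refine ⟨v, ?_, rfl⟩
      simp only [LSB.domSet, Finset.mem_coe, Finset.mem_filter]
      exact hv
  simp_rw [h1]
  rw [Finset.sum_comm]
  refine Finset.sum_congr rfl (fun v _ => ?_)
  rw [← Finset.card_filter, ← SimpleGraph.card_neighborFinset_eq_degree,
    ← Finset.card_powersetCard]
  refine Finset.card_bij' (fun S _ => S.erase v) (fun T _ => insert v T) ?_ ?_ ?_ ?_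
  · intro S hS
    rw [Finset.mem_filter, Finset.mem_powersetCard_univ] at hS
    obtain ⟨hcard, hvS, hdom⟩ := hS
    rw [Finset.mem_powersetCard]
    constructor
    · intro w hw
      rw [Finset.mem_erase] at hw
      rw [SimpleGraph.mem_neighborFinset]
      exact hdom w hw.2 hw.1
    · rw [Finset.card_erase_of_mem hvS, hcard]
      omega
  · intro T hT
    rw [Finset.mem_powersetCard] at hT
    obtain ⟨hsub, hcard⟩ := hT
    have hvT : v ∉ T := fun h => G.irrefl ((SimpleGraph.mem_neighborFinset _ _ _).mp (hsub h))
    rw [Finset.mem_filter, Finset.mem_powersetCard_univ]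
    refine ⟨?_, Finset.mem_insert_self _ _, ?_⟩
    · rw [Finset.card_insert_of_notMem hvT, hcard]
    · intro w hw hne
      rcases Finset.mem_insert.mp hw with h | h
      · exact absurd h hne
      · exact (SimpleGraph.mem_neighborFinset _ _ _).mp (hsub h)
  · intro S hS
    rw [Finset.mem_filter] at hS
    exact Finset.insert_erase hS.2.1
  · intro T hT
    rw [Finset.mem_powersetCard] at hT
    have hvT : v ∉ T := fun h => G.irrefl ((SimpleGraph.mem_neighborFinset _ _ _).mp (hT.1 h))
    exact Finset.erase_insert hvT

lemma LSB.numIndIso_eq {V W : Type*} [Fintype V] [DecidableEq V] (G : SimpleGraph V)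
    (m : ℕ) (H : SimpleGraph W) :
    numIndIso G m H = (((Finset.univ : Finset V).powersetCard m).filter
      (fun (S : Finset V) => Nonempty (G.induce (S : Set V) ≃g H))).card := by
  rw [numIndIso]
  have heq : {S : Finset V | S.card = m ∧ Nonempty (G.induce (S : Set V) ≃g H)}
      = ((((Finset.univ : Finset V).powersetCard m).filter
        (fun (S : Finset V) => Nonempty (G.induce (S : Set V) ≃g H))) : Set (Finset V)) := by
    ext S
    simp [Finset.mem_powersetCard_univ, and_comm]
  rw [heq, Set.ncard_coe_finset]

lemma LSB.sum_numIndIso_le {V : Type*} [Fintype V] [DecidableEq V] (G : SimpleGraph V)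
    (i : ℕ) :
    ∑ a ∈ Finset.Icc 2 ((i + 2) / 2),
        (numIndIso G (i + 2) (completeBipartiteGraph (Fin a) (Fin (i + 2 - a))) : ℤ)
      ≤ ∑ S ∈ (Finset.univ : Finset V).powersetCard (i + 2),
          (if ∃ a ∈ Finset.Icc 2 ((i + 2) / 2), Nonempty (G.induce (S : Set V) ≃g
              completeBipartiteGraph (Fin a) (Fin (i + 2 - a))) then (1 : ℤ) else 0) := by
  simp_rw [LSB.numIndIso_eq, Finset.card_filter]
  push_cast
  rw [show (∑ a ∈ Finset.Icc 2 ((i + 2) / 2), ∑ S ∈ (Finset.univ : Finset V).powersetCard (i + 2),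
      (if Nonempty (G.induce (S : Set V) ≃g
          completeBipartiteGraph (Fin a) (Fin (i + 2 - a))) then (1 : ℤ) else 0))
      = ∑ S ∈ (Finset.univ : Finset V).powersetCard (i + 2), ∑ a ∈ Finset.Icc 2 ((i + 2) / 2),
      (if Nonempty (G.induce (S : Set V) ≃g
          completeBipartiteGraph (Fin a) (Fin (i + 2 - a))) then (1 : ℤ) else 0)
    from Finset.sum_comm]
  apply Finset.sum_le_sum
  intro S _
  by_cases h : ∃ a ∈ Finset.Icc 2 ((i + 2) / 2), Nonempty (G.induce (S : Set V) ≃g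
      completeBipartiteGraph (Fin a) (Fin (i + 2 - a)))
  · rw [if_pos h]
    obtain ⟨a0, ha0I, ⟨e0⟩⟩ := h
    rw [Finset.sum_eq_single_of_mem a0 ha0I]
    · rw [if_pos ⟨e0⟩]
    · intro a haI hne
      rw [if_neg]
      rintro ⟨e⟩
      obtain ⟨h1, h2⟩ := Finset.mem_Icc.mp haI
      obtain ⟨h3, h4⟩ := Finset.mem_Icc.mp ha0I
      exact hne (LSB.bipartite_eq h1 h2 h3 h4 (e.symm.trans e0))
  · rw [if_neg h]
    refine le_of_eq (Finset.sum_eq_zero fun a haI => if_neg fun he => h ⟨a, haI, he⟩)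

lemma LSB.perS {V : Type*} [Fintype V] [DecidableEq V] (G : SimpleGraph V)
    [DecidableRel G.Adj] (i : ℕ) (S : Finset V) (hS : S.card = i + 2) :
    ((LSB.domSet G S).card : ℤ) - (if S ∈ G.cliqueFinset (i + 2) then 1 else 0)
        + (if ∃ a ∈ Finset.Icc 2 ((i + 2) / 2), Nonempty (G.induce (S : Set V) ≃g
            completeBipartiteGraph (Fin a) (Fin (i + 2 - a))) then (1 : ℤ) else 0)
      ≤ (Nat.card ((G.induce (S : Set V))ᶜ.ConnectedComponent) : ℤ) - 1 := by
  by_cases hiso : ∃ a ∈ Finset.Icc 2 ((i + 2) / 2), Nonempty (G.induce (S : Set V) ≃g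
      completeBipartiteGraph (Fin a) (Fin (i + 2 - a)))
  · rw [if_pos hiso]
    obtain ⟨a, haI, ⟨e⟩⟩ := hiso
    obtain ⟨h1, h2⟩ := Finset.mem_Icc.mp haI
    have hb2 : 2 ≤ i + 2 - a := by omega
    obtain ⟨hdom, hcomp, hnc⟩ := LSB.iso_case G S h1 hb2 e
    have hncl : S ∉ G.cliqueFinset (i + 2) := by
      rw [SimpleGraph.mem_cliqueFinset_iff]
      intro h
      exact hnc h.1
    rw [if_neg hncl, hdom]
    have h2' : (2 : ℤ) ≤ Nat.card ((G.induce (S : Set V))ᶜ.ConnectedComponent) := by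
      exact_mod_cast hcomp
    simp only [Finset.card_empty, Nat.cast_zero]
    linarith
  · rw [if_neg hiso, add_zero]
    by_cases hcl : S ∈ G.cliqueFinset (i + 2)
    · have hc := (SimpleGraph.mem_cliqueFinset_iff.mp hcl).1
      obtain ⟨hcard, hdom⟩ := LSB.comp_clique G S hc
      rw [hcard, hdom, hS, if_pos hcl]
    · have hnc : ¬ G.IsClique ↑S := fun h =>
        hcl (SimpleGraph.mem_cliqueFinset_iff.mpr ⟨h, hS⟩)
      have hge := LSB.comp_ge_nonclique G S hnc
      rw [if_neg hcl]
      have : ((LSB.domSet G S).card : ℤ) + 1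
          ≤ Nat.card ((G.induce (S : Set V))ᶜ.ConnectedComponent) := by exact_mod_cast hge
      linarith

/-- For every finite simple graph `G` and every `i ≥ 0`,
`B_i(G) ≥ Σ_{v ∈ V} C(deg v, i+1) − k_{i+2}(G) + Σ_{a=2}^{⌊(i+2)/2⌋} k_{a,i+2−a}(G)`. -/
theorem linStrand_lower_bound
    {V : Type*} [Fintype V] [DecidableEq V] (G : SimpleGraph V) [DecidableRel G.Adj]
    (i : ℕ) :
    (linStrand G i : ℤ) ≥
      ∑ v : V, ((G.degree v).choose (i + 1) : ℤ) - (G.cliqueFinset (i + 2)).card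
        + ∑ a ∈ Finset.Icc 2 ((i + 2) / 2),
            (numIndIso G (i + 2) (completeBipartiteGraph (Fin a) (Fin (i + 2 - a))) : ℤ) := by
  rw [ge_iff_le]
  set P : Finset (Finset V) := (Finset.univ : Finset V).powersetCard (i + 2) with hP
  -- linStrand as a ℤ-valued sum
  have hls : (linStrand G i : ℤ) = ∑ S ∈ P,
      ((Nat.card ((G.induce (S : Set V))ᶜ.ConnectedComponent) : ℤ) - 1) := by
    rw [linStrand, Nat.cast_sum]
    refine Finset.sum_congr rfl fun S hS => ?_
    have hcard : S.card = i + 2 := Finset.mem_powersetCard_univ.mp hS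
    have hne : S.Nonempty := Finset.card_pos.mp (by omega)
    obtain ⟨x, hx⟩ := hne
    have : Nonempty ↥(S : Set V) := ⟨⟨x, by exact_mod_cast hx⟩⟩
    have h1 : 1 ≤ Nat.card ((G.induce (S : Set V))ᶜ.ConnectedComponent) :=
      Nat.one_le_iff_ne_zero.mpr (Nat.card_ne_zero.mpr ⟨⟨(G.induce (S : Set V))ᶜ.connectedComponentMk
        (Classical.arbitrary _)⟩, inferInstance⟩)
    rw [Nat.cast_sub h1, Nat.cast_one]
  -- degree sum
  have hdeg : ∑ v : V, ((G.degree v).choose (i + 1) : ℤ)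
      = ∑ S ∈ P, ((LSB.domSet G S).card : ℤ) := by
    rw [← Nat.cast_sum, ← Nat.cast_sum, LSB.sum_domSet G i]
  -- clique sum
  have hclq : ((G.cliqueFinset (i + 2)).card : ℤ)
      = ∑ S ∈ P, (if S ∈ G.cliqueFinset (i + 2) then (1 : ℤ) else 0) := by
    have hsub : G.cliqueFinset (i + 2) ⊆ P := by
      intro S hS
      rw [hP, Finset.mem_powersetCard_univ]
      exact (SimpleGraph.mem_cliqueFinset_iff.mp hS).2
    rw [Finset.sum_ite_mem, Finset.inter_eq_right.mpr hsub, Finset.sum_const, nsmul_eq_mul,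
      mul_one]
  rw [hls, hdeg, hclq]
  calc ∑ S ∈ P, ((LSB.domSet G S).card : ℤ)
        - ∑ S ∈ P, (if S ∈ G.cliqueFinset (i + 2) then (1 : ℤ) else 0)
        + ∑ a ∈ Finset.Icc 2 ((i + 2) / 2),
            (numIndIso G (i + 2) (completeBipartiteGraph (Fin a) (Fin (i + 2 - a))) : ℤ)
      ≤ ∑ S ∈ P, ((LSB.domSet G S).card : ℤ)
        - ∑ S ∈ P, (if S ∈ G.cliqueFinset (i + 2) then (1 : ℤ) else 0)
        + ∑ S ∈ P, (if ∃ a ∈ Finset.Icc 2 ((i + 2) / 2), Nonempty (G.induce (S : Set V) ≃g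
            completeBipartiteGraph (Fin a) (Fin (i + 2 - a))) then (1 : ℤ) else 0) := by
        have := LSB.sum_numIndIso_le G i
        linarith
    _ = ∑ S ∈ P, (((LSB.domSet G S).card : ℤ)
          - (if S ∈ G.cliqueFinset (i + 2) then (1 : ℤ) else 0)
          + (if ∃ a ∈ Finset.Icc 2 ((i + 2) / 2), Nonempty (G.induce (S : Set V) ≃g
              completeBipartiteGraph (Fin a) (Fin (i + 2 - a))) then (1 : ℤ) else 0)) := by
        rw [← Finset.sum_sub_distrib, ← Finset.sum_add_distrib]
    _ ≤ ∑ S ∈ P, ((Nat.card ((G.induce (S : Set V))ᶜ.ConnectedComponent) : ℤ) - 1) := by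
        refine Finset.sum_le_sum fun S hS => ?_
        exact LSB.perS G i S (Finset.mem_powersetCard_univ.mp hS)
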